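/- arXiv:2106.06326 — 2 statements merged into one kernel-verified Lean document; each statement's English description precedes it below -/
import Mathlib

section
/- Let H be a hypothesis class of measurable functions X → {0,1}, P_M and P_T probability distributions over X, and f_M, f_T : X → {0,1} the labeling functions of the intermediate and target domains. Let h*_S ∈ H be any fixed hypothesis, h* := argmin_{h∈H} [ε_M(h) + ε_T(h)] (assumed to exist), and λ := ε_M(h*) + ε_T(h*). Then for every h ∈ H: ε_T(h) ≤ ε_M(h, h*_S) + d_{H△H}(P_M, P_T) + ε_M(h*_S) + λ, where ε_M(h) := ε_{P_M}(h, f_M), ε_T(h) := ε_{P_T}(h, f_T), ε_M(h,h') := E_{x~P_M}[|h(x)−h'(x)|], and d_{H△H} is the symmetric difference hypothesis divergence. -/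
open MeasureTheory

/-- Expected disagreement `ε_D(f,g) = E_{x~D} |f(x) - g(x)|`. -/
noncomputable def eps {X : Type*} [MeasurableSpace X] (D : Measure X)
    (f g : X → ℝ) : ℝ :=
  ∫ x, |f x - g x| ∂D

/-- Symmetric difference hypothesis divergence for a class of real-valued
(binary) hypotheses. -/
noncomputable def dHdH {X : Type*} [MeasurableSpace X] (H : Set (X → ℝ))
    (P Q : Measure X) : ℝ :=
  2 * sSup {r : ℝ | ∃ h ∈ H, ∃ h' ∈ H,
    r = |(P {x | h x ≠ h' x}).toReal - (Q {x | h x ≠ h' x}).toReal|}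

lemma eps_eq_measure {X : Type*} [MeasurableSpace X] (D : Measure X)
    (f g : X → ℝ) (hf : Measurable f) (hg : Measurable g)
    (hbf : ∀ x, f x = 0 ∨ f x = 1) (hbg : ∀ x, g x = 0 ∨ g x = 1) :
    eps D f g = (D {x | f x ≠ g x}).toReal := by
  have hset : MeasurableSet {x | f x ≠ g x} :=
    (measurableSet_eq_fun hf hg).compl
  have hfun : (fun x => |f x - g x|) =
      Set.indicator {x | f x ≠ g x} (fun _ => (1:ℝ)) := by
    funext x
    by_cases hx : f x = g x
    · simp [Set.indicator, hx]
    · have h1 : |f x - g x| = 1 := by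
        rcases hbf x with h | h <;> rcases hbg x with h' | h' <;>
          simp [h, h'] at hx ⊢
      simp [Set.indicator, hx, h1]
  rw [eps, hfun, integral_indicator_const (1:ℝ) hset]
  simp
  rfl

lemma toReal_triangle {X : Type*} [MeasurableSpace X] (D : Measure X)
    [IsFiniteMeasure D] (f g k : X → ℝ) :
    (D {x | f x ≠ g x}).toReal ≤
      (D {x | f x ≠ k x}).toReal + (D {x | k x ≠ g x}).toReal := by
  have hsub : {x | f x ≠ g x} ⊆ {x | f x ≠ k x} ∪ {x | k x ≠ g x} := by
    intro x hx
    by_cases h1 : f x = k x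
    · right; intro h2; exact hx (h1.trans h2)
    · left; exact h1
  have h := (measure_mono hsub).trans (measure_union_le (μ := D) _ _)
  have h1 : D {x | f x ≠ k x} ≠ ⊤ := measure_ne_top _ _
  have h2 : D {x | k x ≠ g x} ≠ ⊤ := measure_ne_top _ _
  calc (D {x | f x ≠ g x}).toReal
      ≤ (D {x | f x ≠ k x} + D {x | k x ≠ g x}).toReal :=
        ENNReal.toReal_mono (by simp [ENNReal.add_ne_top, h1, h2]) h
    _ = _ := ENNReal.toReal_add h1 h2

theorem stmt_2 {X : Type*} [MeasurableSpace X]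
    (P_M P_T : Measure X) [IsProbabilityMeasure P_M] [IsProbabilityMeasure P_T]
    (H : Set (X → ℝ)) (f_M f_T : X → ℝ)
    (hmeasH : ∀ h ∈ H, Measurable h)
    (hbinH : ∀ h ∈ H, ∀ x, h x = 0 ∨ h x = 1)
    (hmM : Measurable f_M) (hmT : Measurable f_T)
    (hbM : ∀ x, f_M x = 0 ∨ f_M x = 1) (hbT : ∀ x, f_T x = 0 ∨ f_T x = 1)
    (hS hstar : X → ℝ) (hhS : hS ∈ H) (hhstar : hstar ∈ H)
    (hmin : ∀ g ∈ H, eps P_M hstar f_M + eps P_T hstar f_T ≤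
      eps P_M g f_M + eps P_T g f_T) :
    ∀ h ∈ H, eps P_T h f_T ≤
      eps P_M h hS + dHdH H P_M P_T + eps P_M hS f_M +
        (eps P_M hstar f_M + eps P_T hstar f_T) := by
  intro h hh
  set S : Set ℝ := {r : ℝ | ∃ a ∈ H, ∃ a' ∈ H,
    r = |(P_M {x | a x ≠ a' x}).toReal - (P_T {x | a x ≠ a' x}).toReal|} with hSdef
  have hbdd : BddAbove S := by
    refine ⟨1, ?_⟩
    rintro r ⟨a, _, a', _, rfl⟩
    have h1 : (P_M {x | a x ≠ a' x}).toReal ≤ 1 := by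
      have := prob_le_one (μ := P_M) (s := {x | a x ≠ a' x})
      simpa using ENNReal.toReal_mono (by simp) this
    have h2 : (P_T {x | a x ≠ a' x}).toReal ≤ 1 := by
      have := prob_le_one (μ := P_T) (s := {x | a x ≠ a' x})
      simpa using ENNReal.toReal_mono (by simp) this
    have h3 : (0:ℝ) ≤ (P_M {x | a x ≠ a' x}).toReal := ENNReal.toReal_nonneg
    have h4 : (0:ℝ) ≤ (P_T {x | a x ≠ a' x}).toReal := ENNReal.toReal_nonneg
    rw [abs_le]; constructor <;> linarith
  have hsup_nonneg : 0 ≤ sSup S := by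
    refine le_csSup hbdd ?_
    exact ⟨hS, hhS, hS, hhS, by simp⟩
  -- key: m_T(h,h*) ≤ m_M(h,h*) + sSup S
  have hkey : (P_T {x | h x ≠ hstar x}).toReal ≤
      (P_M {x | h x ≠ hstar x}).toReal + sSup S := by
    have hmem : |(P_M {x | h x ≠ hstar x}).toReal -
        (P_T {x | h x ≠ hstar x}).toReal| ∈ S :=
      ⟨h, hh, hstar, hhstar, rfl⟩
    have := le_csSup hbdd hmem
    have habs := abs_sub_abs_le_abs_sub (P_T {x | h x ≠ hstar x}).toReal
      (P_M {x | h x ≠ hstar x}).toReal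
    have h5 : (P_T {x | h x ≠ hstar x}).toReal -
        (P_M {x | h x ≠ hstar x}).toReal ≤
        |(P_M {x | h x ≠ hstar x}).toReal - (P_T {x | h x ≠ hstar x}).toReal| := by
      rw [abs_sub_comm]; exact le_abs_self _
    linarith
  have hmh := hmeasH h hh
  have hmS := hmeasH hS hhS
  have hmst := hmeasH hstar hhstar
  have hbh := hbinH h hh
  have hbS := hbinH hS hhS
  have hbst := hbinH hstar hhstar
  rw [eps_eq_measure P_T h f_T hmh hmT hbh hbT,
      eps_eq_measure P_M h hS hmh hmS hbh hbS,
      eps_eq_measure P_M hS f_M hmS hmM hbS hbM,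
      eps_eq_measure P_M hstar f_M hmst hmM hbst hbM,
      eps_eq_measure P_T hstar f_T hmst hmT hbst hbT]
  have t1 := toReal_triangle P_T h f_T hstar  -- wrong order? need f≠g ≤ f≠k + k≠g
  -- m_T(h, f_T) ≤ m_T(h, h*) + m_T(h*, f_T)
  have T1 : (P_T {x | h x ≠ f_T x}).toReal ≤
      (P_T {x | h x ≠ hstar x}).toReal + (P_T {x | hstar x ≠ f_T x}).toReal :=
    toReal_triangle P_T h f_T hstar
  have T2 : (P_M {x | h x ≠ hstar x}).toReal ≤
      (P_M {x | h x ≠ hS x}).toReal + (P_M {x | hS x ≠ hstar x}).toReal :=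
    toReal_triangle P_M h hstar hS
  have T3 : (P_M {x | hS x ≠ hstar x}).toReal ≤
      (P_M {x | hS x ≠ f_M x}).toReal + (P_M {x | f_M x ≠ hstar x}).toReal :=
    toReal_triangle P_M hS hstar f_M
  have hsymm : (P_M {x | f_M x ≠ hstar x}).toReal =
      (P_M {x | hstar x ≠ f_M x}).toReal := by
    have hset : {x | f_M x ≠ hstar x} = {x | hstar x ≠ f_M x} := by
      ext x; exact ne_comm
    rw [hset]
  rw [dHdH, ← hSdef]
  linarith
end

section
/- Finite-class version of semi-supervised learnability: let H be a finite hypothesis class with c* ∈ H, and χ : H × X → [0,1] a compatibility function with χ(c*,P) ≥ 1 − t. Suppose we draw m_u ≥ (1/(2ε²))·ln(2|H|/δ') unlabeled samples S (so that with probability 1−δ', all h ∈ H satisfy |χ(h,P) − χ̂(h,S)| ≤ ε), and m_l ≥ (1/ε)·ln(|H_{t+2ε}|/δ'') labeled samples, where H_{t+2ε} := {h ∈ H : χ(h,P) ≥ 1 − t − 2ε}. Then with probability at least 1 − δ' − δ'', every h ∈ H with zero empirical labeled error and empirical compatibility χ̂(h,S) ≥ 1 − t − ε satisfies err(h) ≤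 ε. -/
open MeasureTheory
open scoped Classical

/-- True error of `h` with respect to target `cstar` under `P`. -/
noncomputable def err {X : Type*} [MeasurableSpace X] (P : Measure X)
    (h cstar : X → Bool) : ℝ :=
  (P {x | h x ≠ cstar x}).toReal

/-- Expected compatibility `χ(h,P) = E_{x~P} χ(h,x)`. -/
noncomputable def chiP {X : Type*} [MeasurableSpace X] (χ : (X → Bool) → X → ℝ)
    (P : Measure X) (h : X → Bool) : ℝ :=
  ∫ x, χ h x ∂P

/-- Empirical compatibility `χ̂(h,S)` over an unlabeled sample of size `m`. -/
noncomputable def chiHat {X : Type*} (χ : (X → Bool) → X → ℝ) (m : ℕ)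
    (s : Fin m → X) (h : X → Bool) : ℝ :=
  (1 / (m : ℝ)) * ∑ i, χ h (s i)

open Real ProbabilityTheory


-- key analytic inequality: for p ∈ [0,1], t ≥ 0: 1 - p + p e^t ≤ exp(t²/8 + t p)
lemma key_ineq {p t : ℝ} (hp0 : 0 ≤ p) (hp1 : p ≤ 1) (ht : 0 ≤ t) :
    1 - p + p * exp t ≤ exp (t ^ 2 / 8 + t * p) := by
  rcases eq_or_lt_of_le hp0 with h0 | h0
  · simp only [← h0, mul_zero, zero_mul, sub_zero, add_zero]
    exact one_le_exp (by positivity)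
  rcases eq_or_lt_of_le hp1 with h1 | h1
  · subst h1
    have : (1:ℝ) - 1 + 1 * exp t = exp t := by ring
    rw [this]
    apply exp_le_exp.2; nlinarith
  -- 0 < p < 1
  set D : ℝ → ℝ := fun u => 1 - p + p * exp u with hD
  have hDpos : ∀ u, 0 < D u := by
    intro u; have := exp_pos u; simp only [hD]; nlinarith
  rw [← Real.log_le_iff_le_exp (hDpos t)]
  set g : ℝ → ℝ := fun u => u ^ 2 / 8 + u * p - Real.log (D u) with hg
  set g1 : ℝ → ℝ := fun u => u / 4 + p - p * exp u / D u with hg1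
  have hderiv : ∀ u, HasDerivAt g (g1 u) u := by
    intro u
    have hDd : HasDerivAt D (p * exp u) u := by
      exact ((Real.hasDerivAt_exp u).const_mul p).const_add (1 - p)
    have hlog : HasDerivAt (fun u => Real.log (D u)) (p * exp u / D u) u :=
      hDd.log (hDpos u).ne'
    have hsq : HasDerivAt (fun u : ℝ => u ^ 2 / 8 + u * p) (u / 4 + p) u := by
      have h1 : HasDerivAt (fun u : ℝ => u ^ 2) (2 * u) u := by
        simpa using hasDerivAt_pow 2 u
      have := (h1.div_const 8).add ((hasDerivAt_id u).mul_const p)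
      rw [show u / 4 + p = 2 * u / 8 + 1 * p by ring]
      exact this
    exact hsq.sub hlog
  have hderiv1 : ∀ u, HasDerivAt g1
      (1/4 - (p * exp u * D u - p * exp u * (p * exp u)) / (D u) ^ 2) u := by
    intro u
    have hDd : HasDerivAt D (p * exp u) u := by
      exact ((Real.hasDerivAt_exp u).const_mul p).const_add (1 - p)
    have hnum : HasDerivAt (fun u => p * exp u) (p * exp u) u :=
      (Real.hasDerivAt_exp u).const_mul p
    have hq : HasDerivAt (fun u => p * exp u / D u)
        ((p * exp u * D u - p * exp u * (p * exp u)) / (D u) ^ 2) u :=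
      hnum.div hDd (hDpos u).ne'
    have hlin : HasDerivAt (fun u : ℝ => u / 4 + p) (1/4) u := by
      have := ((hasDerivAt_id u).div_const 4).add_const p
      simpa using this
    exact hlin.sub hq
  have hg1mono : Monotone g1 := by
    apply monotone_of_deriv_nonneg
    · exact fun u => (hderiv1 u).differentiableAt
    · intro u
      rw [(hderiv1 u).deriv]
      have hDu := hDpos u
      have he := exp_pos u
      have key : 4 * (p * exp u * (1 - p)) ≤ (D u) ^ 2 := by
        have : (D u) ^ 2 - 4 * (p * exp u * (1 - p)) = ((1 - p) - p * exp u)^2 := by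
          simp only [hD]; ring
        nlinarith [sq_nonneg ((1 - p) - p * exp u)]
      have heq : p * exp u * D u - p * exp u * (p * exp u) = p * exp u * (1 - p) := by
        simp only [hD]; ring
      rw [heq, sub_nonneg, div_le_iff₀ (by positivity)]
      simp only [hD] at key ⊢
      nlinarith [key]
  have hg10 : g1 0 = 0 := by simp [hg1, hD]
  have hgmono : MonotoneOn g (Set.Ici 0) := by
    apply monotoneOn_of_deriv_nonneg (convex_Ici 0)
    · exact fun u _ => ((hderiv u).differentiableAt.continuousAt).continuousWithinAt
    · exact fun u _ => ((hderiv u).differentiableAt).differentiableWithinAt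
    · intro u hu
      rw [(hderiv u).deriv, ← hg10]
      exact hg1mono (le_of_lt (by simpa using hu))
  have hg0 : g 0 = 0 := by simp [hg, hD]
  have : 0 ≤ g t := by
    rw [← hg0]
    exact hgmono (by simp) (by simpa using ht) ht
  simp only [hg] at this
  linarith

lemma mgf_step {X : Type*} [MeasurableSpace X] (P : Measure X) [IsProbabilityMeasure P]
    {f : X → ℝ} (hf : Measurable f) (h01 : ∀ x, f x ∈ Set.Icc (0:ℝ) 1) {t : ℝ} (ht : 0 ≤ t) :
    ∫ x, exp (t * f x) ∂P ≤ exp (t ^ 2 / 8 + t * ∫ x, f x ∂P) := by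
  have hfint : Integrable f P := by
    refine Integrable.mono' (integrable_const 1) hf.aestronglyMeasurable ?_
    filter_upwards with x
    rw [Real.norm_eq_abs, abs_of_nonneg (h01 x).1]; exact (h01 x).2
  set p := ∫ x, f x ∂P with hp
  have hp0 : 0 ≤ p := integral_nonneg fun x => (h01 x).1
  have hp1 : p ≤ 1 := by
    calc p ≤ ∫ _x, (1:ℝ) ∂P := integral_mono hfint (integrable_const 1) fun x => (h01 x).2
    _ = 1 := by simp
  have hpt : ∀ x, exp (t * f x) ≤ 1 - f x + f x * exp t := by
    intro x
    have hx := h01 x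
    have := convexOn_exp.2 (Set.mem_univ (0:ℝ)) (Set.mem_univ t)
      (by linarith [hx.2] : (0:ℝ) ≤ 1 - f x) hx.1 (by ring)
    simpa [mul_comm] using this
  have hint2 : Integrable (fun x => 1 - f x + f x * exp t) P :=
    ((integrable_const 1).sub hfint).add (hfint.mul_const _)
  have hint1 : Integrable (fun x => exp (t * f x)) P := by
    refine Integrable.mono' (integrable_const (exp t)) ((hf.const_mul t).exp).aestronglyMeasurable ?_
    filter_upwards with x
    rw [Real.norm_eq_abs, abs_of_nonneg (exp_nonneg _)]
    exact exp_le_exp.2 (by nlinarith [(h01 x).1, (h01 x).2])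
  calc ∫ x, exp (t * f x) ∂P ≤ ∫ x, (1 - f x + f x * exp t) ∂P :=
        integral_mono hint1 hint2 hpt
    _ = 1 - p + p * exp t := by
        have hA : Integrable (fun x => 1 - f x) P := (integrable_const 1).sub hfint
        have hB : Integrable (fun x => f x * exp t) P := hfint.mul_const _
        rw [integral_add hA hB, integral_sub (integrable_const 1) hfint,
          MeasureTheory.integral_mul_const, integral_const]
        simp [hp, mul_comm]
    _ ≤ exp (t ^ 2 / 8 + t * p) := key_ineq hp0 hp1 ht


lemma hoeff_tail {X : Type*} [MeasurableSpace X] (P : Measure X) [IsProbabilityMeasure P]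
    {f : X → ℝ} (hf : Measurable f) (h01 : ∀ x, f x ∈ Set.Icc (0:ℝ) 1) (n : ℕ) {ε : ℝ}
    (hε : 0 < ε) :
    ((Measure.pi fun _ : Fin n => P)
      {ω : Fin n → X | (n : ℝ) * ((∫ x, f x ∂P) + ε) ≤ ∑ i, f (ω i)}).toReal ≤
      exp (-2 * n * ε ^ 2) := by
  letI : MeasureSpace X := ⟨P⟩
  have hvol : (Measure.pi fun _ : Fin n => P) = (volume : Measure (Fin n → X)) := rfl
  set p := ∫ x, f x ∂P with hp
  set t : ℝ := 4 * ε with htdef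
  have ht : 0 ≤ t := by positivity
  have hint1 : Integrable (fun x => exp (t * f x)) P := by
    refine Integrable.mono' (integrable_const (exp t)) ((hf.const_mul t).exp).aestronglyMeasurable ?_
    filter_upwards with x
    rw [Real.norm_eq_abs, abs_of_nonneg (exp_nonneg _)]
    exact exp_le_exp.2 (by nlinarith [(h01 x).1, (h01 x).2])
  have hprod : Integrable (fun ω : Fin n → X => exp (t * ∑ i, f (ω i)))
      (Measure.pi fun _ : Fin n => P) := by
    rw [hvol]
    have : (fun ω : Fin n → X => exp (t * ∑ i, f (ω i)))
        = fun ω : Fin n → X => ∏ i, exp (t * f (ω i)) := by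
      ext ω; rw [Finset.mul_sum, exp_sum]
    rw [this]
    exact Integrable.fintype_prod (f := fun _ : Fin n => fun x => exp (t * f x)) fun i => hint1
  have hmgf : mgf (fun ω : Fin n → X => ∑ i, f (ω i)) (Measure.pi fun _ : Fin n => P) t
      = (∫ x, exp (t * f x) ∂P) ^ n := by
    rw [mgf, hvol]
    have : (fun ω : Fin n → X => exp (t * ∑ i, f (ω i)))
        = fun ω : Fin n → X => ∏ i, exp (t * f (ω i)) := by
      ext ω; rw [Finset.mul_sum, exp_sum]
    rw [this]
    have := MeasureTheory.integral_fintype_prod_eq_pow (ι := Fin n) (fun x => exp (t * f x)) (μ := P)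
    rw [← hvol]
    simpa using this
  have hchern := measure_ge_le_exp_mul_mgf (μ := Measure.pi fun _ : Fin n => P)
    (X := fun ω : Fin n → X => ∑ i, f (ω i)) ((n : ℝ) * (p + ε)) ht hprod
  refine le_trans hchern ?_
  rw [hmgf]
  have hstep := mgf_step P hf h01 ht
  have hbase : (0:ℝ) ≤ ∫ x, exp (t * f x) ∂P := integral_nonneg fun x => (exp_nonneg _)
  calc exp (-t * ((n:ℝ) * (p + ε))) * (∫ x, exp (t * f x) ∂P) ^ n
      ≤ exp (-t * ((n:ℝ) * (p + ε))) * (exp (t ^ 2 / 8 + t * p)) ^ n := by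
        exact mul_le_mul_of_nonneg_left (pow_le_pow_left₀ hbase hstep n) (exp_nonneg _)
    _ = exp (-2 * n * ε ^ 2) := by
        rw [← exp_nat_mul, ← exp_add]
        congr 1
        simp only [htdef]; ring

lemma label_tail {X : Type*} [MeasurableSpace X] (P : Measure X) [IsProbabilityMeasure P]
    {h cstar : X → Bool} (hh : Measurable h) (hc : Measurable cstar) (n : ℕ) {ε : ℝ}
    (hε : 0 < ε) (hε1 : ε ≤ 1) (herr : ε < err P h cstar) :
    ((Measure.pi fun _ : Fin n => P) {s : Fin n → X | ∀ i, h (s i) = cstar (s i)}).toReal ≤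
      exp (-(ε * n)) := by
  set A : Set X := {x | h x = cstar x} with hA
  have hAm : MeasurableSet A := by
    have : A = (fun x => (h x, cstar x)) ⁻¹' {p : Bool × Bool | p.1 = p.2} := rfl
    rw [this]
    exact (hh.prodMk hc) (by measurability)
  have hset : {s : Fin n → X | ∀ i, h (s i) = cstar (s i)} = Set.pi Set.univ fun _ => A := by
    ext s; simp [Set.mem_pi, hA]
  have hPA : (P A).toReal ≤ 1 - ε := by
    have hc1 : P Aᶜ = 1 - P A := prob_compl_eq_one_sub hAm
    have hAc : Aᶜ = {x | h x ≠ cstar x} := by ext x; simp [hA]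
    have herr' : ε < (P Aᶜ).toReal := by rwa [hAc]
    have h1 : (P Aᶜ).toReal = 1 - (P A).toReal := by
      rw [hc1, ENNReal.toReal_sub_of_le prob_le_one (by simp)]
      simp
    linarith
  rw [hset, Measure.pi_pi]
  simp only [Finset.prod_const, Finset.card_univ, Fintype.card_fin]
  rw [ENNReal.toReal_pow]
  calc (P A).toReal ^ n ≤ (1 - ε) ^ n := by
        apply pow_le_pow_left₀ ENNReal.toReal_nonneg hPA
    _ ≤ exp (-ε) ^ n := by
        apply pow_le_pow_left₀ (by linarith) (by linarith [add_one_le_exp (-ε)])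
    _ = exp (-(ε * n)) := by rw [← exp_nat_mul]; ring_nf

theorem stmt_9 {X : Type*} [MeasurableSpace X] (P : Measure X)
    [IsProbabilityMeasure P] (cstar : X → Bool) (hc : Measurable cstar)
    (H : Finset (X → Bool)) (hHmeas : ∀ h ∈ H, Measurable h) (hcH : cstar ∈ H)
    (χ : (X → Bool) → X → ℝ) (hrange : ∀ h x, χ h x ∈ Set.Icc (0 : ℝ) 1)
    (hχmeas : ∀ h ∈ H, Measurable (χ h))
    (t ε δ' δ'' : ℝ) (ht : t ∈ Set.Ioo (0 : ℝ) 1) (hε : ε ∈ Set.Ioo (0 : ℝ) 1)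
    (hδ' : δ' ∈ Set.Ioo (0 : ℝ) 1) (hδ'' : δ'' ∈ Set.Ioo (0 : ℝ) 1)
    (hcompat : 1 - t ≤ chiP χ P cstar)
    (mu ml : ℕ)
    (hmu : (1 / (2 * ε ^ 2)) * Real.log (2 * (H.card : ℝ) / δ') ≤ (mu : ℝ))
    (hml : (1 / ε) * Real.log
      (((H.filter fun h => 1 - t - 2 * ε ≤ chiP χ P h).card : ℝ) / δ'') ≤ (ml : ℝ)) :
    1 - δ' - δ'' ≤
      (((Measure.pi fun _ : Fin mu => P).prod (Measure.pi fun _ : Fin ml => P))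
        {ω : (Fin mu → X) × (Fin ml → X) |
          ∀ h ∈ H, (∀ i, h (ω.2 i) = cstar (ω.2 i)) →
            1 - t - ε ≤ chiHat χ mu ω.1 h → err P h cstar ≤ ε}).toReal := by
  obtain ⟨hε0, hε1⟩ := hε
  obtain ⟨hδ'0, hδ'1⟩ := hδ'
  obtain ⟨hδ''0, hδ''1⟩ := hδ''
  set μu := Measure.pi fun _ : Fin mu => P with hμu
  set μl := Measure.pi fun _ : Fin ml => P with hμl
  set μ := μu.prod μl with hμ
  set H' := H.filter fun h => 1 - t - 2 * ε ≤ chiP χ P h with hH'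
  set H'' := H'.filter fun h => ε < err P h cstar with hH''
  have hcardH : 1 ≤ (H.card : ℝ) := by
    exact_mod_cast Finset.card_pos.2 ⟨cstar, hcH⟩
  have hcH' : cstar ∈ H' := by
    rw [hH', Finset.mem_filter]
    exact ⟨hcH, by linarith⟩
  have hcardH' : 1 ≤ (H'.card : ℝ) := by
    exact_mod_cast Finset.card_pos.2 ⟨cstar, hcH'⟩
  -- mu > 0
  have hlogu : 0 < Real.log (2 * (H.card : ℝ) / δ') := by
    apply Real.log_pos
    rw [lt_div_iff₀ hδ'0]
    nlinarith
  have hmupos : (0:ℝ) < (mu : ℝ) := by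
    have : (0:ℝ) < (1 / (2 * ε ^ 2)) * Real.log (2 * (H.card : ℝ) / δ') := by positivity
    linarith
  -- exp bounds
  have hexpu : exp (-2 * (mu:ℝ) * ε ^ 2) ≤ δ' / (2 * (H.card : ℝ)) := by
    have h1 : Real.log (2 * (H.card : ℝ) / δ') ≤ 2 * ε ^ 2 * (mu : ℝ) := by
      have h2 := mul_le_mul_of_nonneg_left hmu (le_of_lt (by positivity : (0:ℝ) < 2 * ε ^ 2))
      have h3 : (2 * ε ^ 2) * ((1 / (2 * ε ^ 2)) * Real.log (2 * (H.card : ℝ) / δ'))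
          = Real.log (2 * (H.card : ℝ) / δ') := by
        field_simp
      linarith
    have hpos : (0:ℝ) < 2 * (H.card : ℝ) / δ' := by positivity
    have h4 : 2 * (H.card : ℝ) / δ' ≤ exp (2 * ε ^ 2 * (mu:ℝ)) := by
      calc 2 * (H.card : ℝ) / δ' = exp (Real.log (2 * (H.card : ℝ) / δ')) :=
            (Real.exp_log hpos).symm
        _ ≤ _ := exp_le_exp.2 h1
    have h5 : -2 * (mu:ℝ) * ε ^ 2 = -(2 * ε ^ 2 * (mu:ℝ)) := by ring
    rw [h5, Real.exp_neg]
    rw [show δ' / (2 * (H.card : ℝ)) = (2 * (H.card : ℝ) / δ')⁻¹ by rw [inv_div]]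
    exact inv_anti₀ hpos h4
  have hexpl : exp (-(ε * (ml:ℝ))) ≤ δ'' / (H'.card : ℝ) := by
    have h1 : Real.log ((H'.card : ℝ) / δ'') ≤ ε * (ml : ℝ) := by
      have h2 := mul_le_mul_of_nonneg_left hml (le_of_lt hε0)
      have h3 : ε * ((1 / ε) * Real.log ((H'.card : ℝ) / δ''))
          = Real.log ((H'.card : ℝ) / δ'') := by field_simp
      rw [hH'] at h3 h2 ⊢
      linarith
    have hpos : (0:ℝ) < (H'.card : ℝ) / δ'' := by positivity
    have h4 : (H'.card : ℝ) / δ'' ≤ exp (ε * (ml:ℝ)) := by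
      calc (H'.card : ℝ) / δ'' = exp (Real.log ((H'.card : ℝ) / δ'')) :=
            (Real.exp_log hpos).symm
        _ ≤ _ := exp_le_exp.2 h1
    rw [Real.exp_neg]
    rw [show δ'' / (H'.card : ℝ) = ((H'.card : ℝ) / δ'')⁻¹ by rw [inv_div]]
    exact inv_anti₀ hpos h4
  -- bad sets
  set bad : (X → Bool) → Set (Fin mu → X) :=
    fun h => {s | (mu : ℝ) * ((∫ x, χ h x ∂P) + ε) ≤ ∑ i, χ h (s i)} with hbad
  set Bad : Set (Fin mu → X) := ⋃ h ∈ H, bad h with hBad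
  set lab : (X → Bool) → Set (Fin ml → X) :=
    fun h => {s | ∀ i, h (s i) = cstar (s i)} with hlab
  set C : Set ((Fin mu → X) × (Fin ml → X)) := ⋃ h ∈ H'', Set.univ ×ˢ lab h with hC
  set E : Set ((Fin mu → X) × (Fin ml → X)) :=
    {ω : (Fin mu → X) × (Fin ml → X) |
      ∀ h ∈ H, (∀ i, h (ω.2 i) = cstar (ω.2 i)) →
        1 - t - ε ≤ chiHat χ mu ω.1 h → err P h cstar ≤ ε} with hE
  have hsub : Eᶜ ⊆ (Bad ×ˢ (Set.univ : Set (Fin ml → X))) ∪ C := by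
    intro ω hω
    simp only [hE, Set.mem_compl_iff, Set.mem_setOf_eq] at hω
    push_neg at hω
    obtain ⟨h, hH, hlabh, hchi, herr⟩ := hω
    rcases Classical.em (ω.1 ∈ Bad) with hb | hb
    · exact Or.inl ⟨hb, Set.mem_univ _⟩
    · right
      rw [hBad] at hb
      simp only [Set.mem_iUnion, not_exists] at hb
      have hnb := hb h hH
      rw [hbad] at hnb
      simp only [Set.mem_setOf_eq, not_le] at hnb
      have hq : 1 - t - 2 * ε ≤ chiP χ P h := by
        have hchi' : (mu:ℝ) * (1 - t - ε) ≤ ∑ i, χ h (ω.1 i) := by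
          have h6 := hchi
          rw [chiHat, one_div, inv_mul_eq_div, le_div_iff₀ hmupos] at h6
          linarith
        have : (mu:ℝ) * (1 - t - ε) < (mu : ℝ) * ((∫ x, χ h x ∂P) + ε) := lt_of_le_of_lt hchi' hnb
        have h7 : (1 - t - ε) < (∫ x, χ h x ∂P) + ε := by
          exact lt_of_mul_lt_mul_left (by linarith [this]) (le_of_lt hmupos)
        rw [chiP]; linarith
      have hmem : h ∈ H'' := by
        rw [hH'', Finset.mem_filter, hH', Finset.mem_filter]
        exact ⟨⟨hH, hq⟩, herr⟩
      rw [hC]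
      refine Set.mem_biUnion hmem ?_
      exact ⟨Set.mem_univ _, hlabh⟩
  -- measure of Bad
  have hBadBound : (μu Bad).toReal ≤ δ' := by
    have h1 : μu Bad ≤ ∑ h ∈ H, μu (bad h) := measure_biUnion_finset_le H bad
    have h2 : (μu Bad).toReal ≤ ∑ h ∈ H, (μu (bad h)).toReal := by
      refine le_trans (ENNReal.toReal_mono ?_ h1) ?_
      · exact (ENNReal.sum_lt_top.2 fun h _ => measure_lt_top _ _).ne
      · rw [ENNReal.toReal_sum fun h _ => (measure_lt_top _ _).ne]
    refine h2.trans ?_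
    have h3 : ∀ h ∈ H, (μu (bad h)).toReal ≤ exp (-2 * (mu:ℝ) * ε ^ 2) := by
      intro h hH
      exact hoeff_tail P (hχmeas h hH) (hrange h) mu hε0
    calc ∑ h ∈ H, (μu (bad h)).toReal ≤ ∑ _h ∈ H, exp (-2 * (mu:ℝ) * ε ^ 2) :=
          Finset.sum_le_sum h3
      _ = (H.card : ℝ) * exp (-2 * (mu:ℝ) * ε ^ 2) := by
          rw [Finset.sum_const, nsmul_eq_mul]
      _ ≤ (H.card : ℝ) * (δ' / (2 * (H.card : ℝ))) := by
          apply mul_le_mul_of_nonneg_left hexpu (by positivity)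
      _ = δ' / 2 := by field_simp
      _ ≤ δ' := by linarith
  -- measure of C
  have hCBound : (μ C).toReal ≤ δ'' := by
    have h1 : μ C ≤ ∑ h ∈ H'', μ (Set.univ ×ˢ lab h) :=
      measure_biUnion_finset_le H'' _
    have h2 : (μ C).toReal ≤ ∑ h ∈ H'', (μ (Set.univ ×ˢ lab h)).toReal := by
      refine le_trans (ENNReal.toReal_mono ?_ h1) ?_
      · exact (ENNReal.sum_lt_top.2 fun h _ => measure_lt_top _ _).ne
      · rw [ENNReal.toReal_sum fun h _ => (measure_lt_top _ _).ne]
    refine h2.trans ?_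
    have h3 : ∀ h ∈ H'', (μ (Set.univ ×ˢ lab h)).toReal ≤ exp (-(ε * (ml:ℝ))) := by
      intro h hh
      rw [hH'', Finset.mem_filter, hH', Finset.mem_filter] at hh
      have hmeash : Measurable h := hHmeas h hh.1.1
      rw [hμ, Measure.prod_prod, measure_univ, one_mul]
      exact label_tail P hmeash hc ml hε0 (le_of_lt hε1) hh.2
    calc ∑ h ∈ H'', (μ (Set.univ ×ˢ lab h)).toReal ≤ ∑ _h ∈ H'', exp (-(ε * (ml:ℝ))) :=
          Finset.sum_le_sum h3
      _ = (H''.card : ℝ) * exp (-(ε * (ml:ℝ))) := by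
          rw [Finset.sum_const, nsmul_eq_mul]
      _ ≤ (H'.card : ℝ) * (δ'' / (H'.card : ℝ)) := by
          apply mul_le_mul (by exact_mod_cast Finset.card_filter_le H' _) hexpl
            (exp_nonneg _) (by positivity)
      _ = δ'' := by field_simp
  -- combine
  have hEcBound : (μ Eᶜ).toReal ≤ δ' + δ'' := by
    have h1 : μ Eᶜ ≤ μ (Bad ×ˢ (Set.univ : Set (Fin ml → X))) + μ C :=
      le_trans (measure_mono hsub) (measure_union_le _ _)
    have h2 : (μ (Bad ×ˢ (Set.univ : Set (Fin ml → X)))).toReal = (μu Bad).toReal := by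
      rw [hμ, Measure.prod_prod, measure_univ, mul_one]
    have h3 : (μ Eᶜ).toReal ≤ (μ (Bad ×ˢ (Set.univ : Set (Fin ml → X)))).toReal + (μ C).toReal := by
      refine le_trans (ENNReal.toReal_mono ?_ h1) ?_
      · exact (ENNReal.add_ne_top.2 ⟨(measure_lt_top _ _).ne, (measure_lt_top _ _).ne⟩)
      · rw [ENNReal.toReal_add (measure_lt_top _ _).ne (measure_lt_top _ _).ne]
    rw [h2] at h3
    linarith
  have hfull : 1 ≤ (μ E).toReal + (μ Eᶜ).toReal := by
    have h1 : (μ Set.univ) ≤ μ E + μ Eᶜ := by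
      rw [← Set.union_compl_self E]
      exact measure_union_le _ _
    have h2 : (1:ℝ) ≤ (μ E + μ Eᶜ).toReal := by
      have := ENNReal.toReal_mono
        (ENNReal.add_ne_top.2 ⟨(measure_lt_top _ _).ne, (measure_lt_top _ _).ne⟩) h1
      rwa [measure_univ, ENNReal.toReal_one] at this
    rwa [ENNReal.toReal_add (measure_lt_top _ _).ne (measure_lt_top _ _).ne] at h2
  linarith
end
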